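/- Let K be an imaginary quadratic field with D = D_K the absolute value of its discriminant, and let ℓ be an odd prime. Let p_1, …, p_M be distinct rational primes such that for each j: p_j does not divide 2D, p_j < (1/4)·D^{1/(2ℓ)}, and p_j splits in K, i.e. p_j·𝓞_K = 𝔭_j·𝔭_j' for two distinct prime ideals 𝔭_j ≠ 𝔭_j' of the ring of integers 𝓞_K. Then M · |Cl_K[ℓ]| ≤ |Cl_K|. -/

import Mathlib

open NumberField Filter
open scoped nonZeroDivisors
set_option synthInstance.maxHeartbeats 1000000
set_option maxHeartbeats 1000000

variable (K : Type*) [Field K] [NumberField K]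

lemma exists_conj_pair (hK : Module.finrank ℚ K = 2) (hIm : IsEmpty (K →+* ℝ)) :
    ∃ ψ : K →ₐ[ℚ] ℂ, ∀ x : K,
      (∑ σ : K →ₐ[ℚ] ℂ, σ x) = ψ x + (starRingEnd ℂ) (ψ x) ∧
      (∏ σ : K →ₐ[ℚ] ℂ, σ x) = ψ x * (starRingEnd ℂ) (ψ x) := by
  classical
  have hcard : Fintype.card (K →ₐ[ℚ] ℂ) = 2 := by
    rw [AlgHom.card]; exact hK
  have : Nonempty (K →ₐ[ℚ] ℂ) := Fintype.card_pos_iff.mp (by omega)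
  obtain ⟨ψ⟩ := this
  refine ⟨ψ, fun x => ?_⟩
  let τ : K →ₐ[ℚ] ℂ := ((starRingEnd ℂ).comp ψ.toRingHom).toRatAlgHom
  have hτ : ∀ y : K, τ y = (starRingEnd ℂ) (ψ y) := fun y => rfl
  have hne : ψ ≠ τ := by
    intro h
    have hreal : NumberField.ComplexEmbedding.IsReal (ψ.toRingHom : K →+* ℂ) := by
      rw [NumberField.ComplexEmbedding.isReal_iff]
      ext y
      have := congrArg (fun f => (f : K →ₐ[ℚ] ℂ) y) h
      simpa [hτ] using this.symm
    exact hIm.false hreal.embedding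
  have huniv : (Finset.univ : Finset (K →ₐ[ℚ] ℂ)) = {ψ, τ} := by
    symm
    apply Finset.eq_univ_of_card
    rw [Finset.card_pair hne, hcard]
  constructor
  · rw [huniv, Finset.sum_pair hne, hτ]
  · rw [huniv, Finset.prod_pair hne, hτ]

lemma trace_norm_embed (hK : Module.finrank ℚ K = 2) (hIm : IsEmpty (K →+* ℝ)) :
    ∃ ψ : K →ₐ[ℚ] ℂ, ∀ x : K,
      (algebraMap ℚ ℂ) (Algebra.trace ℚ K x) = ψ x + (starRingEnd ℂ) (ψ x) ∧
      (algebraMap ℚ ℂ) (Algebra.norm ℚ x) = ψ x * (starRingEnd ℂ) (ψ x) := by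
  obtain ⟨ψ, hψ⟩ := exists_conj_pair K hK hIm
  refine ⟨ψ, fun x => ⟨?_, ?_⟩⟩
  · rw [trace_eq_sum_embeddings (E := ℂ)]; exact (hψ x).1
  · rw [Algebra.norm_eq_prod_embeddings ℚ ℂ]; exact (hψ x).2

lemma key_discr_ineq (hK : Module.finrank ℚ K = 2) (hIm : IsEmpty (K →+* ℝ))
    (α : 𝓞 K) (hirr : (algebraMap (𝓞 K) K) α ∉ (algebraMap ℚ K).range) :
    (|NumberField.discr K| : ℚ) ≤ 4 * Algebra.norm ℚ ((algebraMap (𝓞 K) K) α) := by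
  classical
  set a : K := (algebraMap (𝓞 K) K) α with ha
  -- the basis {a, 1}
  have li : LinearIndependent ℚ ![(1:K), a] := by
    rw [LinearIndependent.pair_iff' one_ne_zero]
    intro s hs
    exact hirr ⟨s, by simpa [Algebra.smul_def] using hs⟩
  have hfin : Fintype.card (Fin 2) = Module.finrank ℚ K := by simp [hK]
  let b' : Module.Basis (Fin 2) ℚ K := basisOfLinearIndependentOfCardEqFinrank li hfin
  have hb' : ∀ i, b' i = ![(1:K), a] i := fun i => by
    simp [b', coe_basisOfLinearIndependentOfCardEqFinrank]
  -- change of basis with the integral basis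
  let b : Module.Basis (Module.Free.ChooseBasisIndex ℤ (𝓞 K)) ℚ K := integralBasis K
  let e := b.indexEquiv b'
  let b'' : Module.Basis (Fin 2) ℚ K := b.reindex e
  let P : Matrix (Fin 2) (Fin 2) ℚ := b''.toMatrix ⇑b'
  have hPb : Matrix.vecMul (⇑b'') (P.map (algebraMap ℚ K)) = ⇑b' := b''.toMatrix_map_vecMul ⇑b'
  have hdiscr : Algebra.discr ℚ ⇑b' = P.det ^ 2 * Algebra.discr ℚ ⇑b'' := by
    conv_lhs => rw [← hPb]
    exact Algebra.discr_of_matrix_vecMul ⇑b'' P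
  have hb''d : Algebra.discr ℚ ⇑b'' = (NumberField.discr K : ℚ) := by
    rw [NumberField.coe_discr]
    rw [show ⇑b'' = ⇑b ∘ ⇑e.symm by rw [← Module.Basis.coe_reindex]]
    exact Algebra.discr_reindex ℚ b e
  -- P has integer entries
  let αv : Fin 2 → 𝓞 K := ![1, α]
  have hαv : ∀ j, (algebraMap (𝓞 K) K) (αv j) = b' j := by
    intro j
    fin_cases j <;> simp [αv, hb', ha]
  let P₀ : Matrix (Fin 2) (Fin 2) ℤ :=
    Matrix.of fun i j => (RingOfIntegers.basis K).repr (αv j) (e.symm i)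
  have hP : P = P₀.map (algebraMap ℤ ℚ) := by
    ext i j
    rw [Matrix.map_apply]
    show b''.repr (b' j) i = _
    rw [Module.Basis.repr_reindex_apply, ← hαv j, integralBasis_repr_apply]
    rfl
  have hPdet : P.det = ((P₀.det : ℤ) : ℚ) := by
    rw [hP]
    rw [show P₀.map (algebraMap ℤ ℚ) = (algebraMap ℤ ℚ).mapMatrix P₀ from rfl, ← RingHom.map_det]
    simp
  set q : ℚ := Algebra.discr ℚ ⇑b' with hqdef
  have hq0 : q ≠ 0 := Algebra.discr_not_zero_of_basis ℚ b'
  set m : ℤ := P₀.det with hmdef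
  have hm : q = (m : ℚ) ^ 2 * (NumberField.discr K : ℚ) := by
    rw [hdiscr, hb''d, hPdet]
  have hm0 : m ≠ 0 := by
    intro h
    rw [h] at hm
    simp at hm
    exact hq0 hm
  -- embeddings
  obtain ⟨ψ, hψ⟩ := trace_norm_embed K hK hIm
  set z : ℂ := ψ a with hz
  set w : ℂ := (starRingEnd ℂ) z with hw
  set t : ℚ := Algebra.trace ℚ K a with ht
  set n : ℚ := Algebra.norm ℚ a with hn
  have hq : algebraMap ℚ ℂ q = (z - w) ^ 2 := by
    have e00 : b' 0 = 1 := by rw [hb' 0]; rfl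
    have e11 : b' 1 = a := by rw [hb' 1]; rfl
    have hqq : q = Algebra.trace ℚ K (1 * 1) * Algebra.trace ℚ K (a * a)
        - Algebra.trace ℚ K (1 * a) * Algebra.trace ℚ K (a * 1) := by
      rw [hqdef, Algebra.discr_def, Matrix.det_fin_two]
      simp only [Algebra.traceMatrix_apply, Algebra.traceForm_apply, e00, e11]
    have hst : ∀ x : K, algebraMap ℚ ℂ (Algebra.trace ℚ K x) = ψ x + (starRingEnd ℂ) (ψ x) :=
      fun x => (hψ x).1
    have key : ∀ x y : K, algebraMap ℚ ℂ (Algebra.trace ℚ K x * Algebra.trace ℚ K y)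
        = (ψ x + (starRingEnd ℂ) (ψ x)) * (ψ y + (starRingEnd ℂ) (ψ y)) := fun x y => by
      rw [map_mul]; rw [hst x, hst y]
    rw [hqq, hw, hz, map_sub, key, key]
    simp only [map_one, map_mul, one_mul, mul_one]
    ring
  -- q is negative
  have hqle : q ≤ 0 := by
    have h1 : (starRingEnd ℂ) (z - w) = -(z - w) := by
      rw [hw, map_sub, Complex.conj_conj]
      ring
    have h2 : (algebraMap ℚ ℂ) q = -((Complex.normSq (z - w) : ℝ) : ℂ) := by
      rw [hq, sq, ← Complex.mul_conj (z - w), h1]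
      ring
    have h3 : ((q : ℝ) : ℂ) = (algebraMap ℚ ℂ) q := by
      simp [Complex.ofReal_ratCast]
    have h4 : (q : ℝ) = -(Complex.normSq (z - w)) := by
      have := h3.trans h2
      exact_mod_cast this
    have h5 : (q : ℝ) ≤ 0 := by
      rw [h4]
      simp [Complex.normSq_nonneg]
    exact_mod_cast h5
  have hqneg : q < 0 := lt_of_le_of_ne hqle hq0
  have hdneg : (NumberField.discr K : ℚ) < 0 := by
    rcases lt_or_ge ((NumberField.discr K : ℚ)) 0 with h | h
    · exact h
    · exfalso
      nlinarith [sq_nonneg ((m : ℚ))]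
  have hm1 : (1 : ℚ) ≤ (m : ℚ) ^ 2 := by
    have : (1 : ℤ) ≤ m ^ 2 := by
      rcases m.lt_or_lt_of_ne hm0 with h | h <;> nlinarith
    exact_mod_cast this
  have hqd : q ≤ (NumberField.discr K : ℚ) := by
    rw [hm]
    nlinarith
  -- 4n = t² - q
  have h4n : 4 * n = t ^ 2 - q := by
    apply (algebraMap ℚ ℂ).injective
    rw [map_sub, map_mul, map_pow, hq]
    rw [show (algebraMap ℚ ℂ) n = z * w from by rw [hn, hz, hw]; exact (hψ a).2]
    rw [show (algebraMap ℚ ℂ) t = z + w from by rw [ht, hz, hw]; exact (hψ a).1]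
    rw [map_ofNat]
    ring
  -- conclude
  rw [abs_of_neg hdneg]
  have ht2 : (0:ℚ) ≤ t ^ 2 := sq_nonneg t
  linarith

lemma absNorm_split (hK : Module.finrank ℚ K = 2) (pp : ℕ) (hp : pp.Prime)
    (P Q : Ideal (𝓞 K)) (hP : P.IsPrime) (hQ : Q.IsPrime)
    (hspan : Ideal.span {((pp : ℕ) : 𝓞 K)} = P * Q) :
    Ideal.absNorm P = pp ∧ Ideal.absNorm Q = pp := by
  have hrank : Module.finrank ℤ (𝓞 K) = 2 := by
    rw [RingOfIntegers.rank]; exact hK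
  have hspan_norm : Ideal.absNorm (Ideal.span {((pp : ℕ) : 𝓞 K)}) = pp ^ 2 := by
    rw [Ideal.absNorm_span_singleton]
    have hc : ((pp : ℕ) : 𝓞 K) = algebraMap ℤ (𝓞 K) (pp : ℤ) := by push_cast; rfl
    rw [hc, Algebra.norm_algebraMap_of_basis (RingOfIntegers.basis K) ((pp : ℤ))]
    rw [show Fintype.card (Module.Free.ChooseBasisIndex ℤ (𝓞 K)) = 2 from by
      rw [← Module.finrank_eq_card_basis (RingOfIntegers.basis K)]; exact hrank]
    simp [Int.natAbs_pow]
  have hmul : Ideal.absNorm P * Ideal.absNorm Q = pp ^ 2 := by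
    rw [← map_mul, ← hspan, hspan_norm]
  have hP1 : Ideal.absNorm P ≠ 1 := fun h1 => hP.ne_top (Ideal.absNorm_eq_one_iff.mp h1)
  have hQ1 : Ideal.absNorm Q ≠ 1 := fun h1 => hQ.ne_top (Ideal.absNorm_eq_one_iff.mp h1)
  have hdvdP : Ideal.absNorm P ∣ pp ^ 2 := ⟨Ideal.absNorm Q, hmul.symm⟩
  obtain ⟨k, hk2, hkeq⟩ := (Nat.dvd_prime_pow hp).mp hdvdP
  interval_cases k
  · rw [pow_zero] at hkeq; exact absurd hkeq hP1
  · refine ⟨by simpa using hkeq, ?_⟩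
    have hpp : 0 < pp := hp.pos
    rw [hkeq] at hmul
    have : pp ^ 1 * Ideal.absNorm Q = pp ^ 2 := by simpa using hmul
    have h2 : Ideal.absNorm Q * pp = pp * pp := by
      rw [pow_one] at this; rw [mul_comm]; simpa [sq] using this
    exact Nat.eq_of_mul_eq_mul_right hpp h2
  · exfalso
    rw [hkeq] at hmul
    have hpp : 0 < pp ^ 2 := pow_pos hp.pos 2
    apply hQ1
    have h1 : pp ^ 2 * Ideal.absNorm Q = pp ^ 2 * 1 := by rw [mul_one]; exact hmul
    exact Nat.eq_of_mul_eq_mul_left hpp h1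

lemma odd_pow_ne_sq {pi pj ℓ n : ℕ} (hpi : pi.Prime) (hpj : pj.Prime) (hne : pi ≠ pj)
    (hodd : Odd ℓ) : (pi * pj) ^ ℓ ≠ n ^ 2 := by
  intro h
  have hℓ0 : ℓ ≠ 0 := by rintro rfl; simpa using hodd
  have hn0 : n ≠ 0 := by
    rintro rfl
    have h0 : (pi * pj) ^ ℓ = 0 := by simpa using h
    have := pow_eq_zero_iff hℓ0 |>.mp h0
    exact Nat.mul_ne_zero hpi.ne_zero hpj.ne_zero this
  have hfact := congrArg (fun x : ℕ => x.factorization pi) h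
  simp only [Nat.factorization_pow, Nat.factorization_mul hpi.ne_zero hpj.ne_zero,
    Finsupp.smul_apply, Finsupp.add_apply, hpi.factorization, hpj.factorization,
    Finsupp.single_apply, if_pos rfl, if_neg (Ne.symm hne), smul_eq_mul] at hfact
  simp only [if_true] at hfact
  obtain ⟨k, hk⟩ := hodd
  omega

lemma real_contra {D x y : ℝ} {ℓ : ℕ} (hD : 0 < D) (hℓ : 1 ≤ ℓ)
    (hx : 0 ≤ x) (hy : 0 ≤ y)
    (hx' : x < (1/4) * D ^ ((1:ℝ)/(2*ℓ))) (hy' : y < (1/4) * D ^ ((1:ℝ)/(2*ℓ)))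
    (hge : D ≤ 4 * (x*y) ^ ℓ) : False := by
  set c : ℝ := D ^ ((1:ℝ)/(2*ℓ)) with hc
  have hc0 : 0 < c := Real.rpow_pos_of_pos hD _
  have hxy : x * y < (1/16) * c^2 := by nlinarith
  have hxy0 : 0 ≤ x * y := mul_nonneg hx hy
  have hℓ0 : ℓ ≠ 0 := by omega
  have hpow : (x*y)^ℓ < ((1/16) * c^2)^ℓ := pow_lt_pow_left₀ hxy hxy0 hℓ0
  have hcD : (c^2)^ℓ = D := by
    rw [← pow_mul, ← Real.rpow_natCast c (2*ℓ), hc, ← Real.rpow_mul hD.le]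
    rw [show (1:ℝ)/(2*(ℓ:ℝ)) * ((2*ℓ : ℕ):ℝ) = 1 from by
      push_cast
      field_simp]
    exact Real.rpow_one D
  have hsplit : ((1/16) * c^2)^ℓ = (1/16)^ℓ * D := by rw [mul_pow, hcD]
  have h16 : ((1:ℝ)/16)^ℓ ≤ 1/16 := by
    calc ((1:ℝ)/16)^ℓ ≤ (1/16)^1 := pow_le_pow_of_le_one (by norm_num) (by norm_num) hℓ
    _ = 1/16 := pow_one _
  have hfin : ((1:ℝ)/16)^ℓ * D ≤ (1/16) * D := mul_le_mul_of_nonneg_right h16 hD.le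
  rw [hsplit] at hpow
  linarith



-- The absolute value of the discriminant of an intermediate field `K` of `ℚ̄/ℚ`
-- (junk value `0` in the irrelevant case that `K/ℚ` is infinite-dimensional).
open scoped Classical in
noncomputable def absDisc (K : IntermediateField ℚ (AlgebraicClosure ℚ)) : ℕ :=
  if h : FiniteDimensional ℚ K then
    letI : NumberField K := { to_charZero := inferInstance, to_finiteDimensional := h }
    (NumberField.discr K).natAbs
  else 0

/-- The cardinality `|Cl_K[m]|` of the `m`-torsion subgroup of the class group of `K`. -/
noncomputable def clTors (K : IntermediateField ℚ (AlgebraicClosure ℚ)) (m : ℕ) : ℕ :=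
  Nat.card {x : ClassGroup (𝓞 K) // x ^ m = 1}

/-- If `K` is an imaginary quadratic field of absolute discriminant `D`,
`ℓ` an odd prime, and `p_1, …, p_M` are distinct primes not dividing `2D`, each smaller
than `(1/4)·D^{1/(2ℓ)}` and split in `K`, then `M · |Cl_K[ℓ]| ≤ |Cl_K|`. -/
theorem small_split_primes_bound_torsion
    (K : IntermediateField ℚ (AlgebraicClosure ℚ))
    (hK : Module.finrank ℚ K = 2) (hIm : IsEmpty (K →+* ℝ))
    (ℓ : ℕ) (hℓ : ℓ.Prime) (hodd : Odd ℓ)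
    (M : ℕ) (p : Fin M → ℕ) (hinj : Function.Injective p)
    (hprime : ∀ j, (p j).Prime)
    (hndvd : ∀ j, ¬ (p j ∣ 2 * absDisc K))
    (hsmall : ∀ j, (p j : ℝ) < (1 / 4) * (absDisc K : ℝ) ^ ((1 : ℝ) / (2 * ℓ)))
    (hsplit : ∀ j, ∃ P Q : Ideal (𝓞 K), P ≠ Q ∧ P.IsPrime ∧ Q.IsPrime ∧
      Ideal.span {((p j : ℕ) : 𝓞 K)} = P * Q) :
    M * clTors K ℓ ≤ Nat.card (ClassGroup (𝓞 K)) := by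
  classical
  haveI hfd : FiniteDimensional ℚ K := Module.finite_of_finrank_pos (by rw [hK]; norm_num)
  haveI : NumberField K := { to_charZero := inferInstance, to_finiteDimensional := hfd }
  have habsDisc : absDisc K = (NumberField.discr K).natAbs := by
    rw [absDisc, dif_pos hfd]
  -- group theory reduction
  set G := ClassGroup (𝓞 K) with hG
  let φ : G →* G := powMonoidHom ℓ
  have hker : clTors K ℓ = Nat.card φ.ker := by
    apply Nat.card_congr
    apply Equiv.subtypeEquivRight
    intro x
    simp [φ, powMonoidHom_apply, MonoidHom.mem_ker]
  have hcards : Nat.card G = Nat.card φ.range * Nat.card φ.ker := by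
    rw [Subgroup.card_eq_card_quotient_mul_card_subgroup φ.ker]
    congr 1
    exact Nat.card_congr (QuotientGroup.quotientKerEquivRange φ).toEquiv
  suffices hM : M ≤ Nat.card φ.range by
    calc M * clTors K ℓ = M * Nat.card φ.ker := by rw [hker]
    _ ≤ Nat.card φ.range * Nat.card φ.ker := Nat.mul_le_mul_right _ hM
    _ = Nat.card G := hcards.symm
  -- choose the prime ideals
  choose P Q hPQ hPp hQp hPQspan using hsplit
  have hnz : ∀ j, (P j ∈ (Ideal (𝓞 K))⁰) ∧ Q j ∈ (Ideal (𝓞 K))⁰ := by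
    intro j
    have hsp : Ideal.span {((p j : ℕ) : 𝓞 K)} ≠ 0 := by
      rw [Submodule.zero_eq_bot, Ne, Ideal.span_singleton_eq_bot]
      exact_mod_cast (hprime j).ne_zero
    rw [hPQspan j] at hsp
    constructor <;>
      · rw [mem_nonZeroDivisors_iff_ne_zero]
        intro h
        apply hsp
        rw [h]
        simp
  let u : Fin M → G := fun j => ClassGroup.mk0 ⟨P j, (hnz j).1⟩
  let v : Fin M → G := fun j => ClassGroup.mk0 ⟨Q j, (hnz j).2⟩
  have huv : ∀ j, u j * v j = 1 := by
    intro j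
    show ClassGroup.mk0 _ * ClassGroup.mk0 _ = 1
    rw [← map_mul]
    refine (ClassGroup.mk0_eq_one_iff (mul_mem (hnz j).1 (hnz j).2)).mpr ?_
    show (P j * Q j).IsPrincipal
    rw [← hPQspan j]
    exact ⟨_, rfl⟩
  let f : Fin M → φ.range := fun j => ⟨φ (u j), ⟨u j, rfl⟩⟩
  have hfinj : Function.Injective f := by
    intro i j hij
    by_contra hne
    have hpne : p i ≠ p j := fun h => hne (hinj h)
    have hpow : (u i) ^ ℓ = (u j) ^ ℓ := by
      have := congrArg Subtype.val hij
      simpa [f, φ, powMonoidHom_apply] using this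
    have hval : (u i * v j) ^ ℓ = 1 := by
      have h1 : v j = (u j)⁻¹ := eq_inv_of_mul_eq_one_left (by rw [mul_comm]; exact huv j)
      rw [h1, mul_pow, hpow, inv_pow, mul_inv_cancel]
    have hprin : ((P i * Q j) ^ ℓ).IsPrincipal := by
      apply (ClassGroup.mk0_eq_one_iff (pow_mem (mul_mem (hnz i).1 (hnz j).2) ℓ)).mp
      calc ClassGroup.mk0 ⟨(P i * Q j) ^ ℓ, pow_mem (mul_mem (hnz i).1 (hnz j).2) ℓ⟩
        = ClassGroup.mk0 ((⟨P i, (hnz i).1⟩ * ⟨Q j, (hnz j).2⟩ : (Ideal (𝓞 K))⁰) ^ ℓ) := rfl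
      _ = (u i * v j) ^ ℓ := by rw [map_pow, map_mul]
      _ = 1 := hval
    obtain ⟨α, hα⟩ := hprin.principal
    have hNi := absNorm_split K hK (p i) (hprime i) (P i) (Q i) (hPp i) (hQp i) (hPQspan i)
    have hNj := absNorm_split K hK (p j) (hprime j) (P j) (Q j) (hPp j) (hQp j) (hPQspan j)
    have hNα : (Algebra.norm ℤ α).natAbs = (p i * p j) ^ ℓ := by
      have hα' : (P i * Q j) ^ ℓ = Ideal.span {α} := hα
      have h1 : Ideal.absNorm ((P i * Q j) ^ ℓ) = (p i * p j) ^ ℓ := by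
        rw [map_pow, map_mul, hNi.1, hNj.2]
      rw [hα', Ideal.absNorm_span_singleton] at h1
      exact h1
    by_cases hrat : (algebraMap (𝓞 K) K) α ∈ (algebraMap ℚ K).range
    · -- rational case: the norm is a square, contradiction with ℓ odd
      obtain ⟨r, hr⟩ := hrat
      have hint : IsIntegral ℤ r := by
        rw [← isIntegral_algebraMap_iff (algebraMap ℚ (↥K)).injective, hr]
        exact RingOfIntegers.isIntegral_coe α
      obtain ⟨n, hn⟩ := IsIntegrallyClosed.isIntegral_iff.mp hint
      have hnormr : (Algebra.norm ℚ) ((algebraMap (𝓞 K) K) α) = r ^ 2 := by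
        rw [← hr, Algebra.norm_algebraMap, hK]
      have hz : (Algebra.norm ℤ α : ℚ) = (n : ℚ) ^ 2 := by
        rw [Algebra.coe_norm_int, hnormr, ← hn]
        simp [algebraMap_int_eq]
      have hzz : Algebra.norm ℤ α = n ^ 2 := by exact_mod_cast hz
      have hcontra : (p i * p j) ^ ℓ = n.natAbs ^ 2 := by
        rw [← hNα, hzz, Int.natAbs_pow]
      exact odd_pow_ne_sq (hprime i) (hprime j) hpne hodd hcontra
    · -- irrational case: discriminant bound, contradiction with the size bound
      have hineq := key_discr_ineq K hK hIm α hrat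
      have hD0 : 0 < (NumberField.discr K).natAbs :=
        Nat.pos_of_ne_zero (by simpa using NumberField.discr_ne_zero (K := K))
      have hDabs : |((NumberField.discr K : ℚ))| = ((absDisc K : ℚ)) := by
        rw [habsDisc]
        rw [Nat.cast_natAbs, Int.cast_abs]
      have habspos : (0:ℚ) < |((NumberField.discr K : ℚ))| := by
        apply abs_pos.mpr
        exact_mod_cast NumberField.discr_ne_zero (K := K)
      have hcoe : (Algebra.norm ℤ α : ℚ) = Algebra.norm ℚ ((algebraMap (𝓞 K) K) α) :=
        Algebra.coe_norm_int α
      have hNpos : (0:ℚ) < (Algebra.norm ℤ α : ℚ) := by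
        rw [hcoe]
        linarith
      have hNint : (0:ℤ) < Algebra.norm ℤ α := by exact_mod_cast hNpos
      have hNval : Algebra.norm ℤ α = (((p i * p j) ^ ℓ : ℕ) : ℤ) := by
        rw [← Int.natAbs_of_nonneg hNint.le, hNα]
      have hQle : ((absDisc K : ℚ)) ≤ 4 * (((p i : ℚ)) * ((p j : ℚ))) ^ ℓ := by
        rw [← hDabs]
        calc |((NumberField.discr K : ℚ))|
            ≤ 4 * Algebra.norm ℚ ((algebraMap (𝓞 K) K) α) := hineq
        _ = 4 * (Algebra.norm ℤ α : ℚ) := by rw [hcoe]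
        _ = 4 * (((p i : ℚ)) * ((p j : ℚ))) ^ ℓ := by
            rw [hNval]
            push_cast
            ring
      have hRle : ((absDisc K : ℝ)) ≤ 4 * (((p i : ℝ)) * ((p j : ℝ))) ^ ℓ := by
        exact_mod_cast hQle
      have hDR : (0:ℝ) < (absDisc K : ℝ) := by
        rw [habsDisc]
        exact_mod_cast hD0
      exact real_contra hDR hℓ.pos (Nat.cast_nonneg _) (Nat.cast_nonneg _)
        (hsmall i) (hsmall j) hRle
  have : Finite φ.range := inferInstance
  calc M = Nat.card (Fin M) := by simp
  _ ≤ Nat.card φ.range := Nat.card_le_card_of_injective f hfinj
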